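/- Let w ≥ 1 be an integer, let κ ∈ (0,1], and let v ∈ ℝ^w and u ∈ {−1,1}^w satisfy ‖v − u‖₁ ≤ (1−κ)·w. Then Pr[ham(Round(v), u) ≥ (1/2)·(1 − κ/2)·w] ≤ exp(−κ²·w/8), where Round(v) = (Round(v_1),…,Round(v_w)) with independent coordinates. -/

import Mathlib

open scoped ENNReal

/-- The product of the pmfs `p 0, …, p (k-1)`: the joint distribution of independent
coordinates, the `i`-th having law `p i`. -/
noncomputable def pmfPi {β : Type*} : (k : ℕ) → (Fin k → PMF β) → PMF (Fin k → β)
  | 0, _ => PMF.pure fun i => i.elim0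
  | k + 1, p => (p 0).bind fun b => (pmfPi k fun i => p i.succ).map fun f => Fin.cons b f

/-- The randomized rounding function `Round : ℝ → {−1,1}` (as a pmf over `Bool`, where
`true` codes `1` and `false` codes `−1`): for `v ∈ [−1,1]`, `Round(v) = 1` with
probability `(1+v)/2`; for `|v| > 1`, `Round(v) = sign v` deterministically. -/
noncomputable def roundPMF (v : ℝ) : PMF Bool :=
  PMF.bernoulli (Real.toNNReal ((1 + max (-1) (min 1 v)) / 2))
    (by
      rw [Real.toNNReal_le_one]
      have h1 : max (-1 : ℝ) (min 1 v) ≤ 1 := max_le (by norm_num) (min_le_left _ _)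
      linarith)

/-- The identification of `Bool` with `{−1,1} ⊆ ℝ`. -/
def boolToR (b : Bool) : ℝ := if b then 1 else -1

open Classical in
/-- `ham x y`: the number of coordinates on which `x` and `y` differ. -/
noncomputable def hamR {w : ℕ} (x y : Fin w → ℝ) : ℕ :=
  (Finset.univ.filter fun i => x i ≠ y i).card

lemma pmfPi_apply {β : Type*} : ∀ (k : ℕ) (p : Fin k → PMF β) (x : Fin k → β),
    pmfPi k p x = ∏ i, p i (x i)
  | 0, p, x => by
    rw [pmfPi]
    have : x = fun i => i.elim0 := funext fun i => i.elim0
    simp [this]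
  | k + 1, p, x => by
    classical
    rw [pmfPi, PMF.bind_apply]
    have hmap : ∀ b, ((pmfPi k fun i => p i.succ).map fun f => Fin.cons b f) x
        = if x 0 = b then (pmfPi k fun i => p i.succ) (Fin.tail x) else 0 := by
      intro b
      rw [PMF.map_apply]
      rw [tsum_eq_single (Fin.tail x)]
      · split_ifs with h1 h2 h3
        · rfl
        · exact absurd (by rw [h1]; simp) h2
        · exact absurd (by rw [← Fin.cons_self_tail x, h3]; simp) h1
        · rfl
      · intro f hf
        rw [if_neg]
        intro h
        exact hf (by rw [h]; simp [Fin.tail])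
    rw [tsum_eq_single (x 0)]
    · rw [hmap, if_pos rfl, pmfPi_apply k, Fin.prod_univ_succ]
      rfl
    · intro b hb
      rw [hmap, if_neg (Ne.symm hb), mul_zero]

lemma hoeff_lemma (p t : ℝ) (hp0 : 0 ≤ p) (hp1 : p ≤ 1) (ht : 0 ≤ t) :
    1 - p + p * Real.exp t ≤ Real.exp (t * p + t ^ 2 / 8) := by
  set D : ℝ → ℝ := fun s => 1 - p + p * Real.exp s with hDdef
  have hDpos : ∀ s, 0 < D s := by
    intro s
    rcases eq_or_lt_of_le hp0 with h | h
    · simp [hDdef, ← h]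
    · have := Real.exp_pos s
      have : 0 < p * Real.exp s := mul_pos h this
      simp only [hDdef]; linarith
  have hD : ∀ s, HasDerivAt D (p * Real.exp s) s := by
    intro s
    exact ((Real.hasDerivAt_exp s).const_mul p).const_add (1 - p)
  set G : ℝ → ℝ := fun s => p + s / 4 - p * Real.exp s / D s with hGdef
  have hG : ∀ s, HasDerivAt G (1 / 4 - p * Real.exp s * (1 - p) / (D s) ^ 2) s := by
    intro s
    have h1 : HasDerivAt (fun s : ℝ => p * Real.exp s) (p * Real.exp s) s :=
      (Real.hasDerivAt_exp s).const_mul p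
    have h2 : HasDerivAt (fun s : ℝ => p * Real.exp s / D s)
        ((p * Real.exp s * D s - p * Real.exp s * (p * Real.exp s)) / (D s) ^ 2) s :=
      h1.div (hD s) (hDpos s).ne'
    have h3 : HasDerivAt (fun s : ℝ => p + s / 4) (1 / 4) s := by
      simpa using ((hasDerivAt_id s).div_const 4).const_add p
    have := h3.sub h2
    refine this.congr_deriv ?_
    have hne : D s ≠ 0 := (hDpos s).ne'
    field_simp [hDdef]
    ring
  have hGmono : Monotone G := by
    apply monotone_of_deriv_nonneg
    · intro s; exact (hG s).differentiableAt
    · intro s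
      rw [(hG s).deriv]
      rw [sub_nonneg, div_le_iff₀ (pow_pos (hDpos s) 2)]
      have : (D s) ^ 2 = (1 - p + p * Real.exp s) ^ 2 := by rw [hDdef]
      rw [this]
      nlinarith [sq_nonneg ((1 - p) - p * Real.exp s), Real.exp_pos s,
        mul_nonneg hp0 (Real.exp_pos s).le]
  have hG0 : G 0 = 0 := by simp [hGdef, hDdef]
  set g : ℝ → ℝ := fun s => s * p + s ^ 2 / 8 - Real.log (D s) with hgdef
  have hg : ∀ s, HasDerivAt g (G s) s := by
    intro s
    have hlog : HasDerivAt (fun s : ℝ => Real.log (D s)) (p * Real.exp s / D s) s :=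
      (hD s).log (hDpos s).ne'
    have h1 : HasDerivAt (fun s : ℝ => s * p) p s := by simpa using (hasDerivAt_id s).mul_const p
    have h2 : HasDerivAt (fun s : ℝ => s ^ 2 / 8) (2 * s / 8) s := by
      simpa using (hasDerivAt_pow 2 s).div_const 8
    have := (h1.add h2).sub hlog
    refine this.congr_deriv ?_
    simp only [hGdef]; ring
  have hgmono : MonotoneOn g (Set.Ici 0) := by
    apply monotoneOn_of_deriv_nonneg (convex_Ici 0)
    · exact fun s _ => ((hg s).differentiableAt).continuousAt.continuousWithinAt
    · intro s _; exact ((hg s).differentiableAt).differentiableWithinAt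
    · intro s hs
      rw [(hg s).deriv]
      have : (0 : ℝ) ≤ s := le_of_lt (by simpa using hs)
      calc (0:ℝ) = G 0 := hG0.symm
        _ ≤ G s := hGmono this
  have hg0 : g 0 = 0 := by simp [hgdef, hDdef]
  have hgt : 0 ≤ g t := by
    calc (0:ℝ) = g 0 := hg0.symm
      _ ≤ g t := hgmono (by simp) (by simpa using ht) ht
  have hlog : Real.log (D t) ≤ t * p + t ^ 2 / 8 := by
    simp only [hgdef] at hgt; linarith
  calc 1 - p + p * Real.exp t = D t := rfl
    _ = Real.exp (Real.log (D t)) := (Real.exp_log (hDpos t)).symm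
    _ ≤ _ := Real.exp_le_exp.mpr hlog

/-- For `κ ∈ (0,1]`, `v ∈ ℝ^w` and `u ∈ {−1,1}^w` with
`‖v − u‖₁ ≤ (1−κ)·w`, we have
`Pr[ham(Round(v), u) ≥ (1/2)·(1 − κ/2)·w] ≤ exp(−κ²·w/8)`, where the coordinates of
`Round(v)` are independent. -/
theorem round_ham_concentration
    (w : ℕ) (hw : 1 ≤ w) (κ : ℝ) (hκ0 : 0 < κ) (hκ1 : κ ≤ 1)
    (v u : Fin w → ℝ) (hu : ∀ i, u i = 1 ∨ u i = -1)
    (hclose : ∑ i, |v i - u i| ≤ (1 - κ) * w) :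
    (pmfPi w fun i => roundPMF (v i)).toOuterMeasure
        {x : Fin w → Bool |
          (1 / 2 : ℝ) * (1 - κ / 2) * w ≤ (hamR (fun i => boolToR (x i)) u : ℝ)}
      ≤ ENNReal.ofReal (Real.exp (-(κ ^ 2 * w) / 8)) := by
  classical
  set a : ℝ := (1 / 2 : ℝ) * (1 - κ / 2) * w with ha
  set q : Fin w → ℝ := fun i => (1 + max (-1) (min 1 (v i))) / 2 with hqdef
  have hq0 : ∀ i, 0 ≤ q i := by
    intro i
    have : (-1 : ℝ) ≤ max (-1) (min 1 (v i)) := le_max_left _ _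
    simp only [hqdef]; linarith
  have hq1 : ∀ i, q i ≤ 1 := by
    intro i
    have : max (-1 : ℝ) (min 1 (v i)) ≤ 1 := max_le (by norm_num) (min_le_left _ _)
    simp only [hqdef]; linarith
  set μ : Fin w → Bool → ℝ := fun i b => if b then q i else 1 - q i with hμdef
  have hμ0 : ∀ i b, 0 ≤ μ i b := by
    intro i b; cases b <;> simp [hμdef] <;> [linarith [hq1 i]; exact hq0 i]
  have hround : ∀ i b, roundPMF (v i) b = ENNReal.ofReal (μ i b) := by
    intro i b
    cases b
    · show (((1 : NNReal) - Real.toNNReal (q i) : NNReal) : ℝ≥0∞) = _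
      rw [ENNReal.coe_sub, ENNReal.coe_one]
      show (1 : ℝ≥0∞) - ENNReal.ofReal (q i) = _
      rw [← ENNReal.ofReal_one, ← ENNReal.ofReal_sub _ (hq0 i)]
      rfl
    · show ((Real.toNNReal (q i) : NNReal) : ℝ≥0∞) = _
      rfl
  set f : Fin w → Bool → ℝ := fun i b => if boolToR b = u i then 0 else 1 with hfdef
  have hf0 : ∀ i b, 0 ≤ f i b := by intro i b; simp only [hfdef]; split_ifs <;> norm_num
  set p : Fin w → ℝ := fun i => if u i = 1 then 1 - q i else q i with hpdef
  have hp0 : ∀ i, 0 ≤ p i := by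
    intro i; simp only [hpdef]
    split_ifs
    · linarith [hq1 i]
    · exact hq0 i
  have hp1 : ∀ i, p i ≤ 1 := by
    intro i; simp only [hpdef]
    split_ifs
    · linarith [hq0 i]
    · exact hq1 i
  -- sum of p is small
  have hpsum : ∑ i, p i ≤ (1 - κ) * w / 2 := by
    have hle : ∀ i, p i ≤ |v i - u i| / 2 := by
      intro i
      rcases hu i with h | h <;> simp only [hpdef, hqdef, h] <;> norm_num
      · -- u i = 1 : need 1 - (1 + max..)/2 ≤ |v i - 1|/2, i.e. 1 - max.. ≤ |v i - 1|
        rcases le_total (v i) 1 with h1 | h1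
        · rw [min_eq_right h1]
          rcases le_total (-1 : ℝ) (v i) with h2 | h2
          · rw [max_eq_right h2, abs_of_nonpos (by linarith)]; linarith
          · rw [max_eq_left h2, abs_of_nonpos (by linarith)]; linarith
        · rw [min_eq_left h1, max_eq_right (by norm_num : (-1:ℝ) ≤ 1)]
          have := abs_nonneg (v i - 1); linarith
      · -- u i = -1
        rcases le_total (v i) 1 with h1 | h1
        · rw [min_eq_right h1]
          rcases le_total (-1 : ℝ) (v i) with h2 | h2
          · rw [max_eq_right h2, abs_of_nonneg (by linarith)]; linarith
          · rw [max_eq_left h2]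
            have := abs_nonneg (v i + 1); linarith
        · rw [min_eq_left h1, max_eq_right (by norm_num : (-1:ℝ) ≤ 1),
            abs_of_nonneg (by linarith)]
          linarith
    calc ∑ i, p i ≤ ∑ i, |v i - u i| / 2 := Finset.sum_le_sum fun i _ => hle i
      _ = (∑ i, |v i - u i|) / 2 := by rw [Finset.sum_div]
      _ ≤ (1 - κ) * w / 2 := by linarith
  -- per-coordinate mgf bound
  have hmgf : ∀ i, ∑ b, μ i b * Real.exp (κ * f i b) ≤ Real.exp (κ * p i + κ ^ 2 / 8) := by
    intro i
    have hsum : ∑ b, μ i b * Real.exp (κ * f i b) = 1 - p i + p i * Real.exp κ := by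
      rw [Fintype.sum_bool]
      rcases hu i with h | h <;>
        simp only [hμdef, hfdef, hpdef, h, boolToR] <;> norm_num <;> ring
    rw [hsum]
    exact hoeff_lemma (p i) κ (hp0 i) (hp1 i) hκ0.le
  -- the set, as a predicate on sums
  set S : Set (Fin w → Bool) :=
    {x : Fin w → Bool | a ≤ (hamR (fun i => boolToR (x i)) u : ℝ)} with hSdef
  have hham : ∀ x : Fin w → Bool, ((hamR (fun i => boolToR (x i)) u : ℝ)) = ∑ i, f i (x i) := by
    intro x
    rw [hamR, Finset.natCast_card_filter]
    refine Finset.sum_congr rfl fun i _ => ?_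
    simp only [hfdef]
    by_cases h : boolToR (x i) = u i <;> simp [h]
  have hmemS : ∀ x : Fin w → Bool, x ∈ S → a ≤ ∑ i, f i (x i) := by
    intro x hx
    rw [← hham x]; exact hx
  -- reduce to a real inequality
  set T : Finset (Fin w → Bool) := Finset.univ.filter (· ∈ S) with hTdef
  set A : ℝ := ∑ x ∈ T, ∏ i, μ i (x i) with hAdef
  have hreduce : (pmfPi w fun i => roundPMF (v i)).toOuterMeasure S = ENNReal.ofReal A := by
    rw [PMF.toOuterMeasure_apply, tsum_fintype]
    have : ∀ x : Fin w → Bool, S.indicator (⇑(pmfPi w fun i => roundPMF (v i))) x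
        = if x ∈ S then ENNReal.ofReal (∏ i, μ i (x i)) else 0 := by
      intro x
      rw [Set.indicator_apply]
      split_ifs with h
      · rw [pmfPi_apply]
        calc ∏ i, (roundPMF (v i)) (x i) = ∏ i, ENNReal.ofReal (μ i (x i)) :=
              Finset.prod_congr rfl fun i _ => hround i (x i)
          _ = ENNReal.ofReal (∏ i, μ i (x i)) :=
              (ENNReal.ofReal_prod_of_nonneg fun i _ => hμ0 i (x i)).symm
      · rfl
    simp_rw [this]
    have h2 : ∀ x : Fin w → Bool,
        (if x ∈ S then ENNReal.ofReal (∏ i, μ i (x i)) else 0)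
          = ENNReal.ofReal (if x ∈ S then ∏ i, μ i (x i) else 0) := by
      intro x; split_ifs
      · rfl
      · simp
    simp_rw [h2]
    rw [← ENNReal.ofReal_sum_of_nonneg]
    · congr 1
      rw [hAdef, hTdef, Finset.sum_filter]
    · intro x _
      split_ifs
      · exact Finset.prod_nonneg fun i _ => hμ0 i (x i)
      · exact le_refl 0
  rw [hreduce]
  apply ENNReal.ofReal_le_ofReal
  -- the Chernoff argument in ℝ
  have hexp_pos := Real.exp_pos (κ * a)
  have key : A * Real.exp (κ * a) ≤ Real.exp (κ * (∑ i, p i) + w * (κ ^ 2 / 8)) := by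
    calc A * Real.exp (κ * a)
        = ∑ x ∈ T, (∏ i, μ i (x i)) * Real.exp (κ * a) := by rw [hAdef, Finset.sum_mul]
      _ ≤ ∑ x ∈ T, ∏ i, (μ i (x i) * Real.exp (κ * f i (x i))) := by
          apply Finset.sum_le_sum
          intro x hx
          have hxS : x ∈ S := (Finset.mem_filter.mp hx).2
          have h1 : Real.exp (κ * a) ≤ Real.exp (κ * ∑ i, f i (x i)) := by
            apply Real.exp_le_exp.mpr
            exact mul_le_mul_of_nonneg_left (hmemS x hxS) hκ0.le
          calc (∏ i, μ i (x i)) * Real.exp (κ * a)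
              ≤ (∏ i, μ i (x i)) * Real.exp (κ * ∑ i, f i (x i)) :=
                mul_le_mul_of_nonneg_left h1 (Finset.prod_nonneg fun i _ => hμ0 i (x i))
            _ = ∏ i, (μ i (x i) * Real.exp (κ * f i (x i))) := by
                rw [Finset.mul_sum, Real.exp_sum, ← Finset.prod_mul_distrib]
      _ ≤ ∑ x : Fin w → Bool, ∏ i, (μ i (x i) * Real.exp (κ * f i (x i))) := by
          apply Finset.sum_le_sum_of_subset_of_nonneg (Finset.subset_univ T)
          intro x _ _
          exact Finset.prod_nonneg fun i _ =>
            mul_nonneg (hμ0 i (x i)) (Real.exp_pos _).le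
      _ = ∏ i, ∑ b, μ i b * Real.exp (κ * f i b) := by
          rw [Finset.prod_univ_sum]
          have huniv : (Fintype.piFinset fun _ : Fin w => (Finset.univ : Finset Bool))
              = Finset.univ := Fintype.piFinset_univ
          rw [huniv]
      _ ≤ ∏ i, Real.exp (κ * p i + κ ^ 2 / 8) := by
          apply Finset.prod_le_prod
          · intro i _
            exact Finset.sum_nonneg fun b _ =>
              mul_nonneg (hμ0 i b) (Real.exp_pos _).le
          · intro i _; exact hmgf i
      _ = Real.exp (∑ i, (κ * p i + κ ^ 2 / 8)) := by rw [← Real.exp_sum]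
      _ = Real.exp (κ * (∑ i, p i) + w * (κ ^ 2 / 8)) := by
          rw [Finset.sum_add_distrib, ← Finset.mul_sum, Finset.sum_const, Finset.card_univ,
            Fintype.card_fin, nsmul_eq_mul]
  have hA : A ≤ Real.exp (κ * (∑ i, p i) + w * (κ ^ 2 / 8) - κ * a) := by
    rw [Real.exp_sub, le_div_iff₀ hexp_pos]
    exact key
  calc A ≤ Real.exp (κ * (∑ i, p i) + w * (κ ^ 2 / 8) - κ * a) := hA
    _ ≤ Real.exp (κ * ((1 - κ) * w / 2) + w * (κ ^ 2 / 8) - κ * a) := by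
        apply Real.exp_le_exp.mpr
        have := mul_le_mul_of_nonneg_left hpsum hκ0.le
        linarith
    _ = Real.exp (-(κ ^ 2 * w) / 8) := by
        congr 1
        rw [ha]; ring
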